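/- Closed form of the ADMM β-update for free coordinates in the big-M regime: let λ0 ≥ 0, λ2 > 0, M > 0, ρ > 0 with √(λ0/λ2) > M, and let t ∈ ℝ. Then the unique minimizer of β ↦ (ρ/2)(β − t)² + (λ0/M + λ2M)|β| over β ∈ [−M, M] is β* = T(t; λ0/(Mρ) + λ2M/ρ, M). -/

import Mathlib

/-- The box-constrained soft-thresholding operator `T(t; a, m)`. -/
noncomputable def softT (t a m : ℝ) : ℝ :=
  if |t| ≤ a then 0
  else if |t| ≤ a + m then (|t| - a) * Real.sign t
  else m * Real.sign t

lemma softT_mem (t a m : ℝ) (ha : 0 < a) (hm : 0 < m) :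
    softT t a m ∈ Set.Icc (-m) m := by
  unfold softT
  split_ifs with h1 h2
  · constructor <;> linarith
  · push_neg at h1
    have ht : t ≠ 0 := by
      intro h; rw [h] at h1; simp at h1; linarith
    rcases lt_or_gt_of_ne ht with hlt | hgt
    · rw [Real.sign_of_neg hlt]
      rw [abs_of_neg hlt] at h1 h2 ⊢
      constructor <;> nlinarith
    · rw [Real.sign_of_pos hgt]
      rw [abs_of_pos hgt] at h1 h2 ⊢
      constructor <;> nlinarith
  · push_neg at h1 h2
    have ht : t ≠ 0 := by
      intro h; rw [h] at h1; simp at h1; linarith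
    rcases lt_or_gt_of_ne ht with hlt | hgt
    · rw [Real.sign_of_neg hlt]; constructor <;> nlinarith
    · rw [Real.sign_of_pos hgt]; constructor <;> nlinarith

lemma softT_subgrad (t a m β : ℝ) (ha : 0 < a) (hm : 0 < m)
    (hβ : β ∈ Set.Icc (-m) m) :
    0 ≤ (softT t a m - t) * (β - softT t a m) + a * (|β| - |softT t a m|) := by
  obtain ⟨hβ1, hβ2⟩ := hβ
  have hb1 := le_abs_self β
  have hb2 := neg_abs_le β
  unfold softT
  split_ifs with h1 h2
  · simp only [abs_zero, sub_zero]
    have h : t * β ≤ a * |β| := by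
      calc t * β ≤ |t * β| := le_abs_self _
        _ = |t| * |β| := abs_mul t β
        _ ≤ a * |β| := by nlinarith [abs_nonneg β]
    nlinarith
  · push_neg at h1
    have ht : t ≠ 0 := by
      intro h; rw [h] at h1; simp at h1; linarith
    rcases lt_or_gt_of_ne ht with hlt | hgt
    · rw [Real.sign_of_neg hlt]
      rw [abs_of_neg hlt] at h1 h2 ⊢
      have hs : (-t - a) * (-1 : ℝ) = t + a := by ring
      have habs : |(-t - a) * (-1 : ℝ)| = -(t + a) := by
        rw [hs, abs_of_nonpos (by linarith)]
      rw [habs]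
      nlinarith
    · rw [Real.sign_of_pos hgt]
      rw [abs_of_pos hgt] at h1 h2 ⊢
      have habs : |(t - a) * (1 : ℝ)| = t - a := by
        rw [mul_one, abs_of_nonneg (by linarith)]
      rw [habs]
      nlinarith
  · push_neg at h1 h2
    have ht : t ≠ 0 := by
      intro h; rw [h] at h1; simp at h1; linarith
    rcases lt_or_gt_of_ne ht with hlt | hgt
    · rw [Real.sign_of_neg hlt]
      rw [abs_of_neg hlt] at h1 h2
      have habs : |m * (-1 : ℝ)| = m := by
        rw [mul_neg_one, abs_neg, abs_of_pos hm]
      rw [habs]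
      nlinarith
    · rw [Real.sign_of_pos hgt]
      rw [abs_of_pos hgt] at h1 h2
      have habs : |m * (1 : ℝ)| = m := by
        rw [mul_one, abs_of_pos hm]
      rw [habs]
      nlinarith

lemma softT_min (a m ρ t β : ℝ) (ha : 0 < a) (hm : 0 < m) (hρ : 0 < ρ)
    (hβ : β ∈ Set.Icc (-m) m) (hne : β ≠ softT t a m) :
    (ρ / 2) * (softT t a m - t) ^ 2 + (ρ * a) * |softT t a m|
      < (ρ / 2) * (β - t) ^ 2 + (ρ * a) * |β| := by
  have hG := softT_subgrad t a m β ha hm hβ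
  have hsq : 0 < (β - softT t a m) ^ 2 :=
    pow_pos (abs_pos.mpr (sub_ne_zero.mpr hne)) 2 |>.trans_le (by rw [sq_abs])
  nlinarith [mul_pos hρ hsq, mul_nonneg hρ.le hG]

theorem admm_beta_update_free_bigM (lam0 lam2 M ρ t : ℝ) (hlam0 : 0 ≤ lam0)
    (hlam2 : 0 < lam2) (hM : 0 < M) (hρ : 0 < ρ)
    (hMcond : M < Real.sqrt (lam0 / lam2)) :
    softT t (lam0 / (M * ρ) + lam2 * M / ρ) M ∈ Set.Icc (-M) M ∧
    ∀ β ∈ Set.Icc (-M) M, β ≠ softT t (lam0 / (M * ρ) + lam2 * M / ρ) M →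
      (ρ / 2) * (softT t (lam0 / (M * ρ) + lam2 * M / ρ) M - t) ^ 2
          + (lam0 / M + lam2 * M) * |softT t (lam0 / (M * ρ) + lam2 * M / ρ) M|
        < (ρ / 2) * (β - t) ^ 2 + (lam0 / M + lam2 * M) * |β| := by
  set a := lam0 / (M * ρ) + lam2 * M / ρ with ha_def
  have ha : 0 < a := by
    rw [ha_def]; positivity
  have hc : lam0 / M + lam2 * M = ρ * a := by
    rw [ha_def]; field_simp [ha_def]
  refine ⟨softT_mem t a M ha hM, fun β hβ hne => ?_⟩
  rw [hc]
  exact softT_min a M ρ t β ha hM hρ hβ hne
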